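/- Consider a continuous game with N players, strategy sets S_i ⊆ ℝ^d with S_i ⊆ ℝ^d_+, joint strategy space S = ∏_{i=1}^N S_i, payoffs π_i : S → ℝ, and social function γ : ℝ^{Nd}_+ → ℝ with γ(0) = 0. Suppose: (i) γ is monotone and DR-submodular on ℝ^{Nd}_+; (ii) for every player i and every outcome s ∈ S, π_i(s) ≥ γ(s) − γ(0, s_{-i}); and (curvature bound, for some α ∈ ℝ) for all s, s' ∈ S, γ(s + s') − γ(s') ≥ (1 − α) γ(s). Then the game is (1, α)-smooth: for all outcomes s, s⋆ ∈ S, ∑_{i=1}^N π_i(s⋆_i, s_{-i}) ≥ γ(s⋆) − α γ(s). -/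

import Mathlib

/-- `f` is monotone on `X`: `f x ≤ f y` whenever `x ≤ y` in `X`. -/
def MonotoneOnSet {ι : Type*} (X : Set (ι → ℝ)) (f : (ι → ℝ) → ℝ) : Prop :=
  ∀ ⦃x⦄, x ∈ X → ∀ ⦃y⦄, y ∈ X → x ≤ y → f x ≤ f y

/-- `f` is DR-submodular on `X`. -/
def DRSubmodularOn {ι : Type*} [DecidableEq ι] (X : Set (ι → ℝ)) (f : (ι → ℝ) → ℝ) : Prop :=
  ∀ ⦃x y : ι → ℝ⦄, x ∈ X → y ∈ X → x ≤ y →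
    ∀ i : ι, ∀ k : ℝ, 0 ≤ k →
      x + Pi.single i k ∈ X → y + Pi.single i k ∈ X →
        f (x + Pi.single i k) - f x ≥ f (y + Pi.single i k) - f y

/-- Replace player `i`'s block of the joint strategy `s` by `v`, i.e. the outcome
`(v, s₋ᵢ)`. -/
def upd {N d : ℕ} (s : Fin N × Fin d → ℝ) (i : Fin N) (v : Fin d → ℝ) :
    Fin N × Fin d → ℝ :=
  fun q => if q.1 = i then v q.2 else s q

/-- The joint strategy space `S = ∏ᵢ Sᵢ`, viewed inside `ℝ^{Nd}`. -/
def joint {N d : ℕ} (S : Fin N → Set (Fin d → ℝ)) : Set (Fin N × Fin d → ℝ) :=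
  {s | ∀ i : Fin N, (fun r => s (i, r)) ∈ S i}

/-- Adding a whole nonnegative vector preserves the DR inequality. -/
lemma dr_add {ι : Type*} [DecidableEq ι] [Fintype ι] {γ : (ι → ℝ) → ℝ}
    (hDR : DRSubmodularOn {x : ι → ℝ | 0 ≤ x} γ)
    {x y v : ι → ℝ} (hx : 0 ≤ x) (hy : 0 ≤ y) (hv : 0 ≤ v) (hxy : x ≤ y) :
    γ (x + v) - γ x ≥ γ (y + v) - γ y := by
  have key : ∀ T : Finset ι,
      γ (x + fun i => if i ∈ T then v i else 0) - γ x ≥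
      γ (y + fun i => if i ∈ T then v i else 0) - γ y := by
    intro T
    induction T using Finset.induction_on with
    | empty =>
      have h0 : (fun i : ι => if i ∈ (∅ : Finset ι) then v i else 0) = 0 := by
        funext i; simp
      rw [h0]; simp
    | @insert a T ha ih =>
      have hsplit : (fun i => if i ∈ insert a T then v i else 0) =
          (fun i => if i ∈ T then v i else 0) + Pi.single a (v a) := by
        funext i
        by_cases h : i = a
        · subst h
          simp [ha]
        · simp [Pi.single_apply, h, Finset.mem_insert]
      have hvT : (0:ι → ℝ) ≤ fun i => if i ∈ T then v i else 0 := by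
        intro i
        by_cases h : i ∈ T
        · simpa [h] using hv i
        · simp [h]
      have hxT : (0:ι → ℝ) ≤ x + fun i => if i ∈ T then v i else 0 :=
        fun i => add_nonneg (hx i) (hvT i)
      have hyT : (0:ι → ℝ) ≤ y + fun i => if i ∈ T then v i else 0 :=
        fun i => add_nonneg (hy i) (hvT i)
      have hxyT : (x + fun i => if i ∈ T then v i else 0) ≤
          (y + fun i => if i ∈ T then v i else 0) :=
        fun i => add_le_add (hxy i) le_rfl
      have hsing : ∀ i : ι, (0:ℝ) ≤ Pi.single (M := fun _ : ι => ℝ) a (v a) i := by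
        intro i
        rcases eq_or_ne i a with rfl | h
        · rw [Pi.single_eq_same]; exact hv i
        · simp [Pi.single_apply, h]
      have hxm : (x + fun i => if i ∈ T then v i else 0) + Pi.single a (v a)
          ∈ {x : ι → ℝ | 0 ≤ x} := fun i => add_nonneg (hxT i) (hsing i)
      have hym : (y + fun i => if i ∈ T then v i else 0) + Pi.single a (v a)
          ∈ {x : ι → ℝ | 0 ≤ x} := fun i => add_nonneg (hyT i) (hsing i)
      have := hDR hxT hyT hxyT a (v a) (hv a) hxm hym
      rw [hsplit]
      have ex : x + ((fun i => if i ∈ T then v i else 0) + Pi.single a (v a)) =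
          (x + fun i => if i ∈ T then v i else 0) + Pi.single a (v a) := by ring
      have ey : y + ((fun i => if i ∈ T then v i else 0) + Pi.single a (v a)) =
          (y + fun i => if i ∈ T then v i else 0) + Pi.single a (v a) := by ring
      rw [ex, ey]
      linarith
  have := key Finset.univ
  simpa using this

/-- Smoothness of valid utility games with continuous strategies: under monotonicity and
DR-submodularity of the social function `γ`, the payoff condition (ii), and the curvature
bound with parameter `α`, the game is `(1, α)`-smooth. -/
theorem valid_utility_game_smooth {N d : ℕ}
    (S : Fin N → Set (Fin d → ℝ)) (hS : ∀ i, ∀ v ∈ S i, 0 ≤ v)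
    (π : Fin N → (Fin N × Fin d → ℝ) → ℝ)
    (γ : (Fin N × Fin d → ℝ) → ℝ) (hγ0 : γ 0 = 0)
    (hmono : MonotoneOnSet {x : Fin N × Fin d → ℝ | 0 ≤ x} γ)
    (hDR : DRSubmodularOn {x : Fin N × Fin d → ℝ | 0 ≤ x} γ)
    (hpayoff : ∀ i : Fin N, ∀ s ∈ joint S, π i s ≥ γ s - γ (upd s i 0))
    (α : ℝ)
    (hcurv : ∀ s ∈ joint S, ∀ s' ∈ joint S, γ (s + s') - γ s' ≥ (1 - α) * γ s) :
    ∀ s ∈ joint S, ∀ sstar ∈ joint S,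
      ∑ i : Fin N, π i (upd s i (fun r => sstar (i, r))) ≥ γ sstar - α * γ s := by
  intro s hs sstar hstar
  have hs0 : (0 : Fin N × Fin d → ℝ) ≤ s := fun q => hS q.1 _ (hs q.1) q.2
  have hstar0 : (0 : Fin N × Fin d → ℝ) ≤ sstar := fun q => hS q.1 _ (hstar q.1) q.2
  -- block vectors of sstar
  set w : Fin N → (Fin N × Fin d → ℝ) :=
    fun i q => if q.1 = i then sstar q else 0 with hw
  have hw0 : ∀ i, (0 : Fin N × Fin d → ℝ) ≤ w i := by
    intro i q
    simp only [hw]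
    split
    · exact hstar0 q
    · exact le_rfl
  -- partial sums
  set P : ℕ → (Fin N × Fin d → ℝ) :=
    fun k => s + ∑ j ∈ Finset.univ.filter (fun j : Fin N => (j : ℕ) < k), w j with hP
  have hPapp : ∀ k q, P k q =
      s q + ∑ j ∈ Finset.univ.filter (fun j : Fin N => (j : ℕ) < k), w j q := by
    intro k q
    simp only [hP, Pi.add_apply, Finset.sum_apply]
  have hP0 : ∀ k, (0 : Fin N × Fin d → ℝ) ≤ P k := by
    intro k q
    rw [hPapp]
    exact add_nonneg (hs0 q)
      (Finset.sum_nonneg fun j _ => hw0 j q)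
  have hPzero : P 0 = s := by
    simp [hP]
  have hsum0 : ∑ j : Fin N, w j = sstar := by
    funext q
    rw [Finset.sum_apply]
    simp only [hw]
    simp [Finset.sum_ite_eq]
  have hPN : P N = s + sstar := by
    funext q
    rw [hPapp]
    have h1 : Finset.univ.filter (fun j : Fin N => (j : ℕ) < N) = Finset.univ := by
      ext j; simp [j.isLt]
    rw [h1]
    have h2 := congrFun hsum0 q
    rw [Finset.sum_apply] at h2
    rw [h2]
    simp
  -- step identity: P i + w i = P (i+1)
  have hstep : ∀ i : Fin N, P i + w i = P ((i : ℕ) + 1) := by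
    intro i
    have hfil : Finset.univ.filter (fun j : Fin N => (j : ℕ) < (i : ℕ) + 1) =
        insert i (Finset.univ.filter (fun j : Fin N => (j : ℕ) < (i : ℕ))) := by
      ext j
      simp only [Finset.mem_filter, Finset.mem_insert, Finset.mem_univ, true_and]
      constructor
      · intro h
        rcases Nat.lt_succ_iff_lt_or_eq.mp h with h | h
        · exact Or.inr h
        · exact Or.inl (Fin.ext h)
      · rintro (rfl | h)
        · exact Nat.lt_succ_self _
        · exact Nat.lt_succ_of_lt h
    have hnot : i ∉ Finset.univ.filter (fun j : Fin N => (j : ℕ) < (i : ℕ)) := by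
      simp
    simp only [hP, hfil, Finset.sum_insert hnot]
    ring
  -- per-player bound
  have hper : ∀ i : Fin N,
      π i (upd s i (fun r => sstar (i, r))) ≥ γ (P ((i : ℕ) + 1)) - γ (P (i : ℕ)) := by
    intro i
    set s' : Fin N × Fin d → ℝ := upd s i (fun r => sstar (i, r)) with hs'
    have hs'mem : s' ∈ joint S := by
      intro j
      by_cases h : j = i
      · subst h
        have : (fun r => s' (j, r)) = fun r => sstar (j, r) := by
          funext r; simp [hs', upd]
        rw [this]; exact hstar j
      · have : (fun r => s' (j, r)) = fun r => s (j, r) := by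
          funext r; simp [hs', upd, h]
        rw [this]; exact hs j
    have hpay := hpayoff i s' hs'mem
    have hupd0 : upd s' i 0 = upd s i 0 := by
      funext q; by_cases h : q.1 = i <;> simp [upd, hs', h]
    rw [hupd0] at hpay
    -- DR step: x = upd s i 0, y = P i, v = w i
    have hx0 : (0 : Fin N × Fin d → ℝ) ≤ upd s i 0 := by
      intro q; simp only [upd]; split
      · simp
      · exact hs0 q
    have hxy : upd s i 0 ≤ P (i : ℕ) := by
      intro q
      have hnn : (0:ℝ) ≤ ∑ j ∈ Finset.univ.filter (fun j : Fin N => (j : ℕ) < (i:ℕ)), w j q :=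
        Finset.sum_nonneg fun j _ => hw0 j q
      have : upd s i 0 q ≤ s q := by
        simp only [upd]; split
        · exact hs0 q
        · exact le_rfl
      calc upd s i 0 q ≤ s q := this
        _ ≤ P (i : ℕ) q := by
            rw [hPapp]
            exact le_add_of_nonneg_right hnn
    have hdr := dr_add hDR hx0 (hP0 (i : ℕ)) (hw0 i) hxy
    have hxv : upd s i 0 + w i = s' := by
      funext q
      by_cases h : q.1 = i
      · have hq : q = (i, q.2) := by
          rw [← h]
        simp only [Pi.add_apply, upd, hw, h, if_pos rfl, hs']
        rw [hq]
        simp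
      · simp [upd, hw, h, hs']
    rw [hxv, hstep i] at hdr
    linarith
  -- sum up
  have hsum : ∑ i : Fin N, (γ (P ((i : ℕ) + 1)) - γ (P (i : ℕ)))
      = γ (P N) - γ (P 0) := by
    rw [Fin.sum_univ_eq_sum_range (fun k => γ (P (k + 1)) - γ (P k)) N]
    exact Finset.sum_range_sub (fun k => γ (P k)) N
  have hge : ∑ i : Fin N, π i (upd s i (fun r => sstar (i, r))) ≥
      ∑ i : Fin N, (γ (P ((i : ℕ) + 1)) - γ (P (i : ℕ))) :=
    Finset.sum_le_sum fun i _ => hper i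
  have hcur := hcurv s hs sstar hstar
  rw [hsum, hPzero, hPN] at hge
  linarith
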